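/- Let K be a field with a non-archimedean valuation v, and let f, g ∈ K[z] be monic polynomials of degrees d and e respectively. Let γ₁, …, γ_{d−1} be the critical points of f (roots of f′, with multiplicity), and for n ≥ 1 set N_{g,n} = Σᵢ v(g(fⁿ(γᵢ))). Let Δ_{g,n} = Disc(g ∘ fⁿ). Then for all n ≥ 0: v(Δ_{g,n}) = dⁿ·v(Disc(g)) + e·n·dⁿ·v(d) + Σ_{k=0}^{n−1} dᵏ·N_{g,n−k}. -/

import Mathlib

/-- The discriminant of a monic polynomial `h` over an algebraically closed field:
`(-1)^(m(m-1)/2) · ∏ᵢ h'(rᵢ)`, the product running over the roots `rᵢ` of `h`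
with multiplicity (`m = deg h`). For monic split polynomials this agrees with the
classical discriminant. -/
noncomputable def polyDisc {K : Type*} [Field K] (h : Polynomial K) : K :=
  (-1 : K) ^ (h.natDegree * (h.natDegree - 1) / 2) *
    (h.roots.map (fun r => h.derivative.eval r)).prod

namespace Stmt7Aux

open Polynomial

variable {K : Type*} [Field K]

lemma av_prod (v : AddValuation K (WithTop ℝ)) (s : Multiset K) :
    v s.prod = (s.map fun x => v x).sum := by
  induction s using Multiset.induction_on with
  | empty => simpa using v.map_one
  | cons a s ih => simp [v.map_mul, ih]

lemma av_neg_one_pow (v : AddValuation K (WithTop ℝ)) (k : ℕ) :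
    v ((-1 : K) ^ k) = 0 := by
  have h1 : v (-1 : K) = 0 := by
    have := v.map_neg (1 : K)
    rwa [v.map_one] at this
  rw [v.map_pow, h1, smul_zero]

lemma v_polyDisc (v : AddValuation K (WithTop ℝ)) (h : Polynomial K) :
    v (polyDisc h) = (h.roots.map fun r => v (h.derivative.eval r)).sum := by
  unfold polyDisc
  rw [v.map_mul, av_neg_one_pow, zero_add, av_prod, Multiset.map_map]
  rfl

/-- Swap a double multiset sum. -/
lemma sum_swap' {α β : Type*} {M : Type*} [AddCommMonoid M] (s : Multiset α)
    (t : Multiset β) (F : α → β → M) :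
    (s.map fun a => (t.map fun b => F a b).sum).sum =
      (t.map fun b => (s.map fun a => F a b).sum).sum := by
  induction s using Multiset.induction_on with
  | empty => simp
  | cons a s ih =>
      simp only [Multiset.map_cons, Multiset.sum_cons, ih, ← Multiset.sum_map_add]

variable [IsAlgClosed K] [CharZero K]

lemma roots_comp (h f : Polynomial K) (hh : h.Monic) (hfd : 1 ≤ f.natDegree) :
    (h.comp f).roots = h.roots.bind fun α => (f - C α).roots := by
  have hne : ∀ α : K, f - C α ≠ 0 := by
    intro α h0
    have : (f - C α).natDegree = f.natDegree := natDegree_sub_C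
    rw [h0, natDegree_zero] at this
    omega
  conv_lhs =>
    rw [(IsAlgClosed.splits h).eq_prod_roots_of_monic hh]
  rw [multiset_prod_comp, Multiset.map_map]
  have hmap : (h.roots.map fun α => (X - C α).comp f) = h.roots.map fun α => f - C α := by
    apply Multiset.map_congr rfl
    intro α _
    simp [sub_comp]
  rw [show ((fun q : Polynomial K => q.comp f) ∘ fun a => X - C a) = fun α => (X - C α).comp f
      from rfl, hmap, roots_multiset_prod]
  · rw [Multiset.bind_map]
  · intro h0
    rcases Multiset.mem_map.mp h0 with ⟨α, _, hα⟩
    exact hne α hα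

lemma key (v : AddValuation K (WithTop ℝ)) (f h : Polynomial K) (hf : f.Monic)
    (hh : h.Monic) (d : ℕ) (hdeg : f.natDegree = d) (hd1 : 1 ≤ d) :
    v (polyDisc (h.comp f)) =
      d • v (polyDisc h) + (d * h.natDegree) • v ((d : K)) +
      (f.derivative.roots.map fun γ => v (h.eval (f.eval γ))).sum := by
  have hdK : (d : K) ≠ 0 := Nat.cast_ne_zero.2 (by omega)
  have hfd : 1 ≤ f.natDegree := hdeg ▸ hd1
  -- the leading coefficient of f' is d
  have hcoeff : f.derivative.coeff (d - 1) = (d : K) := by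
    rw [coeff_derivative]
    have h1 : d - 1 + 1 = d := by omega
    rw [h1]
    have h2 : f.coeff d = 1 := by rw [← hdeg]; exact hf.coeff_natDegree
    rw [h2, one_mul, ← Nat.cast_add_one, h1]
  have hndeg' : f.derivative.natDegree = d - 1 := by
    refine le_antisymm ?_ (le_natDegree_of_ne_zero (by rw [hcoeff]; exact hdK))
    simpa [hdeg] using natDegree_derivative_le f
  have hlc : f.derivative.leadingCoeff = (d : K) := by
    rw [Polynomial.leadingCoeff, hndeg', hcoeff]
  have hfact : f.derivative =
      C (d : K) * (f.derivative.roots.map fun γ => X - C γ).prod := by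
    have := (IsAlgClosed.splits f.derivative).eq_prod_roots
    rwa [hlc] at this
  -- facts about f - C α
  have hsub_mon : ∀ α : K, (f - C α).Monic := fun α =>
    hf.sub_of_left (lt_of_le_of_lt (degree_C_le)
      (natDegree_pos_iff_degree_pos.mp (by omega)))
  have hsub_fact : ∀ α : K, f - C α = ((f - C α).roots.map fun β => X - C β).prod := fun α =>
    (IsAlgClosed.splits _).eq_prod_roots_of_monic (hsub_mon α)
  have hcard : ∀ α : K, Multiset.card (f - C α).roots = d := fun α => by
    rw [splits_iff_card_roots.mp (IsAlgClosed.splits _), natDegree_sub_C, hdeg]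
  have hroot_eval : ∀ α β : K, β ∈ (f - C α).roots → f.eval β = α := by
    intro α β hβ
    have := isRoot_of_mem_roots hβ
    simpa [IsRoot, eval_sub, eval_C, sub_eq_zero] using this
  -- evaluation of a "monic product" polynomial
  have hβsum : ∀ (α γ : K), ((f - C α).roots.map fun β => v (β - γ)).sum
      = v (f.eval γ - α) := by
    intro α γ
    have e1 : ((f - C α).roots.map fun β => v (β - γ))
        = ((f - C α).roots.map fun β => v (γ - β)) :=
      Multiset.map_congr rfl (fun β _ => by rw [← v.map_neg, neg_sub])
    rw [e1, show (f - C α).roots.map (fun β => v (γ - β))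
        = ((f - C α).roots.map fun β => γ - β).map (fun y => v y)
      from (Multiset.map_map _ _ _).symm, ← av_prod]
    congr 1
    have : f.eval γ - α = (f - C α).eval γ := by simp
    rw [this]
    conv_rhs => rw [hsub_fact α]
    rw [eval_multiset_prod, Multiset.map_map]
    simp
  have houter : ∀ x : K, (h.roots.map fun α => v (x - α)).sum = v (h.eval x) := by
    intro x
    rw [show h.roots.map (fun α => v (x - α))
        = (h.roots.map fun α => x - α).map (fun y => v y)
      from (Multiset.map_map _ _ _).symm, ← av_prod]
    congr 1
    conv_rhs =>
      rw [(IsAlgClosed.splits h).eq_prod_roots_of_monic hh]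
    rw [eval_multiset_prod, Multiset.map_map]
    simp
  -- the inner sum over roots of f - C α
  have inner : ∀ α ∈ h.roots,
      (((f - C α).roots).map fun β => v ((h.comp f).derivative.eval β)).sum
        = d • v (h.derivative.eval α) + d • v ((d : K)) +
          (f.derivative.roots.map fun γ => v (f.eval γ - α)).sum := by
    intro α hα
    have step1 : ((f - C α).roots.map fun β => v ((h.comp f).derivative.eval β))
        = ((f - C α).roots.map fun β =>
            (v (h.derivative.eval α) + v ((d : K))) +
              (f.derivative.roots.map fun γ => v (β - γ)).sum) := by
      refine Multiset.map_congr rfl (fun β hβ => ?_)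
      rw [derivative_comp, eval_mul, eval_comp, hroot_eval α β hβ, v.map_mul]
      have hfe : f.derivative.eval β
          = (d : K) * ((f.derivative.roots.map fun γ => β - γ)).prod := by
        conv_lhs => rw [hfact]
        rw [eval_mul, eval_C, eval_multiset_prod, Multiset.map_map]
        simp
      rw [hfe, v.map_mul, av_prod, Multiset.map_map]
      have : ((fun x => v x) ∘ fun γ => β - γ) = fun γ => v (β - γ) := rfl
      rw [this]
      abel
    rw [step1, Multiset.sum_map_add, Multiset.map_const', Multiset.sum_replicate, hcard,
      smul_add]
    congr 1
    rw [sum_swap']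
    refine congrArg _ (Multiset.map_congr rfl (fun γ _ => hβsum α γ))
  -- now assemble
  rw [v_polyDisc, v_polyDisc, roots_comp h f hh hfd, Multiset.map_bind, Multiset.sum_bind,
    Multiset.map_congr rfl inner]
  rw [show (h.roots.map fun α => d • v (h.derivative.eval α) + d • v ((d : K)) +
        (f.derivative.roots.map fun γ => v (f.eval γ - α)).sum)
      = h.roots.map fun α => (d • v (h.derivative.eval α) + d • v ((d : K))) +
        (f.derivative.roots.map fun γ => v (f.eval γ - α)).sum
    from Multiset.map_congr rfl (fun _ _ => rfl)]
  rw [Multiset.sum_map_add, Multiset.sum_map_add, sum_swap']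
  have hswap2 : (f.derivative.roots.map fun γ =>
      (h.roots.map fun α => v (f.eval γ - α)).sum).sum
      = (f.derivative.roots.map fun γ => v (h.eval (f.eval γ))).sum :=
    congrArg _ (Multiset.map_congr rfl (fun γ _ => houter (f.eval γ)))
  rw [hswap2, show (h.roots.map fun α => d • v (h.derivative.eval α))
      = (h.roots.map fun α => v (h.derivative.eval α)).map fun x => d • x
    from (Multiset.map_map _ _ _).symm, ← Multiset.sum_map_nsmul,
    Multiset.map_const', Multiset.sum_replicate,
    splits_iff_card_roots.mp (IsAlgClosed.splits h), smul_smul, Nat.mul_comm,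
    Multiset.map_map]
  rfl

lemma iter_monic (f g : Polynomial K) (hf : f.Monic) (hg : g.Monic)
    (hfd : f.natDegree ≠ 0) (n : ℕ) :
    ((fun q : Polynomial K => q.comp f)^[n] g).Monic := by
  induction n with
  | zero => exact hg
  | succ n ih => rw [Function.iterate_succ_apply']; exact ih.comp hf hfd

lemma iter_natDegree (f g : Polynomial K) (n : ℕ) :
    ((fun q : Polynomial K => q.comp f)^[n] g).natDegree
      = g.natDegree * f.natDegree ^ n := by
  induction n with
  | zero => simp
  | succ n ih =>
      rw [Function.iterate_succ_apply', natDegree_comp, ih]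
      ring

lemma eval_iter (f g : Polynomial K) (n : ℕ) (x : K) :
    ((fun q : Polynomial K => q.comp f)^[n] g).eval x
      = g.eval ((fun t => f.eval t)^[n] x) := by
  induction n generalizing x with
  | zero => simp
  | succ n ih =>
      rw [Function.iterate_succ_apply', eval_comp, ih,
        ← Function.iterate_succ_apply]

end Stmt7Aux

theorem stmt_7 {K : Type*} [Field K] [IsAlgClosed K] [CharZero K]
    (v : AddValuation K (WithTop ℝ))
    (f g : Polynomial K) (hf : f.Monic) (hg : g.Monic)
    (d e : ℕ) (hdeg : f.natDegree = d) (hedeg : g.natDegree = e) (hd : 2 ≤ d)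
    (n : ℕ) :
    v (polyDisc ((fun q : Polynomial K => q.comp f)^[n] g)) =
      d ^ n • v (polyDisc g) + (e * n * d ^ n) • v ((d : K)) +
        ∑ k ∈ Finset.range n,
          d ^ k • (f.derivative.roots.map
            (fun γ => v (g.eval ((fun t => f.eval t)^[n - k] γ)))).sum := by
  induction n with
  | zero => simp
  | succ n ih =>
    rw [Function.iterate_succ_apply']
    rw [Stmt7Aux.key v f _ hf (Stmt7Aux.iter_monic f g hf hg (by omega) n) d hdeg (by omega)]
    rw [Stmt7Aux.iter_natDegree, hedeg, hdeg, ih]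
    have hT : (f.derivative.roots.map fun γ =>
        v (((fun q : Polynomial K => q.comp f)^[n] g).eval (f.eval γ))).sum
        = (f.derivative.roots.map fun γ =>
            v (g.eval ((fun t => f.eval t)^[n + 1] γ))).sum := by
      refine congrArg _ (Multiset.map_congr rfl fun γ _ => ?_)
      rw [Stmt7Aux.eval_iter, ← Function.iterate_succ_apply]
    rw [hT, Finset.sum_range_succ']
    simp only [smul_add, Finset.smul_sum, smul_smul, pow_zero, one_smul, Nat.sub_zero,
      Nat.succ_sub_succ_eq_sub]
    have e2 : ∀ k : ℕ, d * d ^ k = d ^ (k + 1) := fun k => by ring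
    simp only [e2]
    have e3 : e * (n + 1) * d ^ (n + 1) = d * (e * n * d ^ n) + d * (e * d ^ n) := by ring
    rw [e3, add_smul]
    abel
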